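/- (Fourier coefficients) Let V be an innerproduct hyperspace over the real hyperfield and S = {α₁, ..., αₙ} an orthogonal set of non-zero vectors. If 1 * α = λ₁ * α₁ # λ₂ * α₂ # ... # λₙ * αₙ for some α ∈ V and λ₁, ..., λₙ ∈ ℝ, then λⱼ = ⟨α, αⱼ⟩ / ‖αⱼ‖² for each j, and hence 1 * α = (⟨α,α₁⟩/‖α₁‖²) * α₁ # ... # (⟨α,αₙ⟩/‖αₙ‖²) * αₙ. -/

import Mathlib

/-- Hyperaddition of two sets: `A # B = ⋃_{a∈A, b∈B} a # b`. -/
def hSum {V : Type*} (hadd : V → V → Set V) (A B : Set V) : Set V :=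
  ⋃ a ∈ A, ⋃ b ∈ B, hadd a b

/-- A commutative hypergroup. -/
structure CommHypergroup (V : Type*) where
  hadd : V → V → Set V
  hadd_nonempty : ∀ a b, (hadd a b).Nonempty
  hadd_comm : ∀ a b, hadd a b = hadd b a
  hadd_assoc : ∀ a b c, hSum hadd {a} (hadd b c) = hSum hadd (hadd a b) {c}
  zero : V
  neg : V → V
  neg_spec : ∀ a, zero ∈ hadd a (neg a) ∧ zero ∈ hadd (neg a) a
  neg_unique : ∀ a b, zero ∈ hadd a b → zero ∈ hadd b a → b = neg a
  mem_shift : ∀ a b c, a ∈ hadd b c → b ∈ hadd a (neg c)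

/-- A hyperfield: hyperaddition, ordinary multiplication. -/
structure Hyperfield (F : Type*) extends CommHypergroup F where
  mul : F → F → F
  mul_assoc' : ∀ a b c, mul (mul a b) c = mul a (mul b c)
  mul_comm' : ∀ a b, mul a b = mul b a
  distrib : ∀ a b c, (mul a) '' (hadd b c) = hadd (mul a b) (mul a c)
  mul_zero' : ∀ a, mul a zero = zero
  one : F
  mul_one' : ∀ a, mul a one = a
  mul_inv' : ∀ a, a ≠ zero → ∃ b, mul a b = one

/-- A hypervector space over a hyperfield `K`. -/
structure HypVecSp (F : Type*) (K : Hyperfield F) (V : Type*) extends CommHypergroup V where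
  smul : F → V → Set V
  smul_nonempty : ∀ a α, (smul a α).Nonempty
  smul_hadd : ∀ a α β, (⋃ x ∈ hadd α β, smul a x) ⊆ hSum hadd (smul a α) (smul a β)
  hadd_smul : ∀ a b α, (⋃ c ∈ K.hadd a b, smul c α) ⊆ hSum hadd (smul a α) (smul b α)
  mul_smul' : ∀ a b α, smul (K.mul a b) α = ⋃ x ∈ smul b α, smul a x
  neg_smul' : ∀ a α, smul (K.neg a) α = smul a (neg α)
  one_smul' : ∀ α, α ∈ smul K.one α
  zero_smul' : ∀ α, zero ∈ smul K.zero α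
  zero_smul_zero : smul K.zero zero = {zero}

/-- The hyper-linear combination `λ₁*α₁ # λ₂*α₂ # ⋯ # λₙ*αₙ` of a list of
scalar/vector pairs (the empty combination is `{θ}`, which is neutral for `#`). -/
def combo {F V : Type*} (hadd : V → V → Set V) (smul : F → V → Set V) (z : V) :
    List (F × V) → Set V
  | [] => {z}
  | p :: l => hSum hadd (smul p.1 p.2) (combo hadd smul z l)

/-- The span of a set `A`: all vectors lying in some finite hyper-linear
combination of elements of `A`. -/
def hspan {F V : Type*} (hadd : V → V → Set V) (smul : F → V → Set V) (z : V)
    (A : Set V) : Set V :=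
  {x | ∃ l : List (F × V), l ≠ [] ∧ (∀ p ∈ l, p.2 ∈ A) ∧ x ∈ combo hadd smul z l}

/-- The real hyperfield: a hyperfield structure on `ℝ` whose multiplication,
zero and one are the usual ones. -/
structure RealHyperfield extends Hyperfield ℝ where
  zero_eq : zero = 0
  one_eq : one = 1
  mul_eq : ∀ a b, mul a b = a * b

/-- An innerproduct hyperspace over the real hyperfield. -/
structure InnerHyp (K : RealHyperfield) (V : Type*) extends
    HypVecSp ℝ K.toHyperfield V where
  inner : V → V → ℝ
  inner_pos : ∀ α, α ≠ zero → 0 < inner α α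
  inner_self_eq_zero : ∀ α, inner α α = 0 ↔ α = zero
  inner_symm : ∀ α β, inner α β = inner β α
  sup_hadd : ∀ α β γ, IsLUB ((fun x => inner x γ) '' hadd α β) (inner α γ + inner β γ)
  sup_smul : ∀ a α β, IsLUB ((fun x => inner x β) '' smul a α) (a * inner α β)

lemma innerHyp_zero_left {K : RealHyperfield} {V : Type*} (W : InnerHyp K V) (γ : V) :
    W.inner W.zero γ = 0 := by
  have h := W.sup_smul K.toHyperfield.zero W.zero γ
  rw [W.zero_smul_zero, K.zero_eq, zero_mul] at h
  have h' : IsLUB {W.inner W.zero γ} (0 : ℝ) := by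
    simpa using h
  exact (isLUB_singleton.unique h')

lemma isLUB_hSum_aux {V : Type*} (hadd : V → V → Set V) (f : V → ℝ)
    (hlub : ∀ a b, IsLUB (f '' hadd a b) (f a + f b))
    {A B : Set V} {sa sb : ℝ} (hA : IsLUB (f '' A) sa) (hB : IsLUB (f '' B) sb) :
    IsLUB (f '' hSum hadd A B) (sa + sb) := by
  constructor
  · rintro x ⟨v, hv, rfl⟩
    simp only [hSum, Set.mem_iUnion] at hv
    obtain ⟨a, ha, b, hb, hv⟩ := hv
    have h1 : f v ≤ f a + f b := (hlub a b).1 ⟨v, hv, rfl⟩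
    have h2 : f a ≤ sa := hA.1 ⟨a, ha, rfl⟩
    have h3 : f b ≤ sb := hB.1 ⟨b, hb, rfl⟩
    linarith
  · intro u hu
    have key : ∀ b ∈ B, sa ≤ u - f b := by
      intro b hb
      refine hA.2 ?_
      rintro x ⟨a, ha, rfl⟩
      have : f a + f b ≤ u := by
        refine (hlub a b).2 ?_
        rintro y ⟨v, hv, rfl⟩
        refine hu ⟨v, ?_, rfl⟩
        simp only [hSum, Set.mem_iUnion]
        exact ⟨a, ha, b, hb, hv⟩
      linarith
    have : sb ≤ u - sa := by
      refine hB.2 ?_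
      rintro y ⟨b, hb, rfl⟩
      have := key b hb
      linarith
    linarith

lemma isLUB_combo {K : RealHyperfield} {V : Type*} (W : InnerHyp K V) (γ : V) :
    ∀ L : List (ℝ × V),
      IsLUB ((fun x => W.inner x γ) '' combo W.hadd W.smul W.zero L)
        ((L.map (fun p => p.1 * W.inner p.2 γ)).sum)
  | [] => by
    simp only [combo, List.map_nil, List.sum_nil, Set.image_singleton,
      innerHyp_zero_left]
    exact isLUB_singleton
  | p :: L => by
    have IH := isLUB_combo W γ L
    have hs := W.sup_smul p.1 p.2 γ
    simp only [combo, List.map_cons, List.sum_cons]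
    exact isLUB_hSum_aux W.hadd _ (fun a b => W.sup_hadd a b γ) hs IH

/-- Fourier coefficients: if `1 * α = λ₁*α₁ # ⋯ # λₙ*αₙ` with the `αᵢ`
orthogonal and non-zero, then `λⱼ = ⟨α,αⱼ⟩/‖αⱼ‖²` and hence
`1 * α = ∑ᵢ (⟨α,αᵢ⟩/‖αᵢ‖²) * αᵢ`. -/
theorem fourier_coefficients {K : RealHyperfield} {V : Type*} (W : InnerHyp K V)
    {n : ℕ} (av : Fin n → V)
    (hne : ∀ i, av i ≠ W.zero)
    (horth : ∀ i j, i ≠ j → W.inner (av i) (av j) = 0)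
    (α : V) (l : Fin n → ℝ)
    (h : W.smul 1 α = combo W.hadd W.smul W.zero (List.ofFn fun i => (l i, av i))) :
    (∀ j, l j = W.inner α (av j) / W.inner (av j) (av j)) ∧
    W.smul 1 α = combo W.hadd W.smul W.zero
      (List.ofFn fun i => (W.inner α (av i) / W.inner (av i) (av i), av i)) := by
  have key : ∀ j, l j = W.inner α (av j) / W.inner (av j) (av j) := by
    intro j
    have h1 := W.sup_smul 1 α (av j)
    rw [h] at h1
    have h2 := isLUB_combo W (av j) (List.ofFn fun i => (l i, av i))
    have heq : (1 : ℝ) * W.inner α (av j) =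
        ((List.ofFn fun i => (l i, av i)).map
          (fun p => p.1 * W.inner p.2 (av j))).sum := h1.unique h2
    rw [List.map_ofFn, List.sum_ofFn] at heq
    simp only [Function.comp] at heq
    have hsum : ∑ i, l i * W.inner (av i) (av j) = l j * W.inner (av j) (av j) := by
      refine Finset.sum_eq_single j (fun i _ hij => ?_) (by simp)
      rw [horth i j hij, mul_zero]
    rw [hsum, one_mul] at heq
    have hpos : 0 < W.inner (av j) (av j) := W.inner_pos (av j) (hne j)
    field_simp [heq]
    exact heq.symm
  refine ⟨key, ?_⟩
  have : (fun i => (W.inner α (av i) / W.inner (av i) (av i), av i))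
      = fun i : Fin n => (l i, av i) := by
    funext i
    rw [key i]
  rw [this]
  exact h
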